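/- Suppose t1 > 0 and ε > 0 satisfy cos(κt) - |sin(κt)| > ε for all t ∈ [0, t1]. If z0 = (x0, y0) satisfies x0² ≥ y0² and x0² ≥ 1/(2ε·t1), then the solution z(t) of the planar system with z(0) = z0 blows up (|x(t)| → ∞) in time at most t1; i.e., the maximal forward existence time is strictly less than t1. -/

import Mathlib

private lemma key1 (a b c s : ℝ) (hc : 0 < c) :
    0 ≤ 2 * a * (a * (1 + c * (a ^ 2 + b ^ 2)) + s * (a ^ 2 + b ^ 2) * b) -
      2 * b * (-b * (1 + c * (a ^ 2 + b ^ 2)) + s * (a ^ 2 + b ^ 2) * a) := by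
  nlinarith [sq_nonneg a, sq_nonneg b, mul_nonneg hc.le (sq_nonneg (a ^ 2 + b ^ 2))]

private lemma key2 (a b c s ε : ℝ) (hε : 0 < ε) (hcs : c - |s| > ε) (hcone : b ^ 2 ≤ a ^ 2) :
    2 * ε * (a ^ 2) ^ 2 ≤ 2 * a * (a * (1 + c * (a ^ 2 + b ^ 2)) + s * (a ^ 2 + b ^ 2) * b) := by
  have hab : |a * b| ≤ a ^ 2 := by
    rw [abs_mul]
    nlinarith [sq_abs a, sq_abs b, abs_nonneg a, abs_nonneg b, sq_nonneg (|a| - |b|)]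
  have habs : -(|s| * a ^ 2) ≤ s * (a * b) := by
    have h1 : |s * (a * b)| ≤ |s| * a ^ 2 := by
      rw [abs_mul]; exact mul_le_mul_of_nonneg_left hab (abs_nonneg s)
    linarith [neg_abs_le (s * (a * b))]
  have hR : (0 : ℝ) ≤ a ^ 2 + b ^ 2 := by positivity
  have h2 := mul_le_mul_of_nonneg_right habs hR
  have h3 : ε * ((a ^ 2 + b ^ 2) * a ^ 2) ≤ (c - |s|) * ((a ^ 2 + b ^ 2) * a ^ 2) :=
    mul_le_mul_of_nonneg_right hcs.le (by positivity)
  nlinarith [sq_nonneg a, mul_nonneg hε.le (mul_nonneg (sq_nonneg a) (sq_nonneg b))]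

/-- If cos(κt) - |sin(κt)| > ε on [0, t1], z₀ lies in the cone Q⁺ and
x₀² ≥ 1/(2 ε t1), then there is no solution of the planar system on all of
[0, t1] with z(0) = z₀: the maximal forward existence time is < t1. -/
theorem stmt_4 (κ t1 ε x0 y0 : ℝ) (ht1 : 0 < t1) (hε : 0 < ε)
    (hcs : ∀ t ∈ Set.Icc (0 : ℝ) t1,
      Real.cos (κ * t) - |Real.sin (κ * t)| > ε)
    (hcone : x0 ^ 2 ≥ y0 ^ 2) (hbig : x0 ^ 2 ≥ 1 / (2 * ε * t1)) :
    ¬ ∃ x y : ℝ → ℝ, x 0 = x0 ∧ y 0 = y0 ∧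
      ∀ t ∈ Set.Icc (0 : ℝ) t1,
        HasDerivAt x
          (x t * (1 + Real.cos (κ * t) * ((x t) ^ 2 + (y t) ^ 2)) +
            Real.sin (κ * t) * ((x t) ^ 2 + (y t) ^ 2) * y t) t ∧
        HasDerivAt y
          (-(y t) * (1 + Real.cos (κ * t) * ((x t) ^ 2 + (y t) ^ 2)) +
            Real.sin (κ * t) * ((x t) ^ 2 + (y t) ^ 2) * x t) t := by
  rintro ⟨x, y, hx0, hy0, hode⟩
  have h0D : (0 : ℝ) ∈ Set.Icc (0 : ℝ) t1 := ⟨le_refl 0, ht1.le⟩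
  have ht1D : t1 ∈ Set.Icc (0 : ℝ) t1 := ⟨ht1.le, le_refl t1⟩
  have hsub : Set.Ioo (0 : ℝ) t1 ⊆ Set.Icc (0 : ℝ) t1 := Set.Ioo_subset_Icc_self
  have hx : ∀ t ∈ Set.Icc (0 : ℝ) t1, HasDerivAt x
      (x t * (1 + Real.cos (κ * t) * ((x t) ^ 2 + (y t) ^ 2)) +
        Real.sin (κ * t) * ((x t) ^ 2 + (y t) ^ 2) * y t) t := fun t ht => (hode t ht).1
  have hy : ∀ t ∈ Set.Icc (0 : ℝ) t1, HasDerivAt y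
      (-(y t) * (1 + Real.cos (κ * t) * ((x t) ^ 2 + (y t) ^ 2)) +
        Real.sin (κ * t) * ((x t) ^ 2 + (y t) ^ 2) * x t) t := fun t ht => (hode t ht).2
  have hcpos : ∀ t ∈ Set.Icc (0 : ℝ) t1, 0 < Real.cos (κ * t) := by
    intro t ht
    have := hcs t ht
    have := abs_nonneg (Real.sin (κ * t))
    linarith
  -- derivative of u = x² - y²
  have hu : ∀ t ∈ Set.Icc (0 : ℝ) t1, HasDerivAt (fun t => x t ^ 2 - y t ^ 2)
      (2 * x t * (x t * (1 + Real.cos (κ * t) * ((x t) ^ 2 + (y t) ^ 2)) +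
          Real.sin (κ * t) * ((x t) ^ 2 + (y t) ^ 2) * y t) -
        2 * y t * (-(y t) * (1 + Real.cos (κ * t) * ((x t) ^ 2 + (y t) ^ 2)) +
          Real.sin (κ * t) * ((x t) ^ 2 + (y t) ^ 2) * x t)) t := by
    intro t ht
    have := ((hx t ht).pow 2).sub ((hy t ht).pow 2)
    refine this.congr_deriv ?_
    push_cast
    ring
  have humono : MonotoneOn (fun t => x t ^ 2 - y t ^ 2) (Set.Icc (0 : ℝ) t1) := by
    apply monotoneOn_of_deriv_nonneg (convex_Icc 0 t1)
    · intro t ht; exact (hu t ht).continuousAt.continuousWithinAt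
    · intro t ht
      rw [interior_Icc] at ht
      exact (hu t (hsub ht)).differentiableAt.differentiableWithinAt
    · intro t ht
      rw [interior_Icc] at ht
      rw [(hu t (hsub ht)).deriv]
      have := key1 (x t) (y t) (Real.cos (κ * t)) (Real.sin (κ * t)) (hcpos t (hsub ht))
      linarith
  -- cone invariance
  have hconet : ∀ t ∈ Set.Icc (0 : ℝ) t1, y t ^ 2 ≤ x t ^ 2 := by
    intro t ht
    have h := humono h0D ht ht.1
    simp only [hx0, hy0] at h
    linarith
  -- derivative of v = x²
  have hv : ∀ t ∈ Set.Icc (0 : ℝ) t1, HasDerivAt (fun t => x t ^ 2)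
      (2 * x t * (x t * (1 + Real.cos (κ * t) * ((x t) ^ 2 + (y t) ^ 2)) +
          Real.sin (κ * t) * ((x t) ^ 2 + (y t) ^ 2) * y t)) t := by
    intro t ht
    have := (hx t ht).pow 2
    refine this.congr_deriv ?_
    push_cast
    ring
  have hvlb : ∀ t ∈ Set.Icc (0 : ℝ) t1, 2 * ε * (x t ^ 2) ^ 2 ≤
      2 * x t * (x t * (1 + Real.cos (κ * t) * ((x t) ^ 2 + (y t) ^ 2)) +
        Real.sin (κ * t) * ((x t) ^ 2 + (y t) ^ 2) * y t) := fun t ht =>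
    key2 (x t) (y t) (Real.cos (κ * t)) (Real.sin (κ * t)) ε hε (hcs t ht) (hconet t ht)
  have hvmono : MonotoneOn (fun t => x t ^ 2) (Set.Icc (0 : ℝ) t1) := by
    apply monotoneOn_of_deriv_nonneg (convex_Icc 0 t1)
    · intro t ht; exact (hv t ht).continuousAt.continuousWithinAt
    · intro t ht
      rw [interior_Icc] at ht
      exact (hv t (hsub ht)).differentiableAt.differentiableWithinAt
    · intro t ht
      rw [interior_Icc] at ht
      rw [(hv t (hsub ht)).deriv]
      have h1 := hvlb t (hsub ht)
      nlinarith [sq_nonneg (x t ^ 2), hε.le]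
  have h2e : (0 : ℝ) < 2 * ε * t1 := by positivity
  have hx0pos : (0 : ℝ) < x0 ^ 2 := lt_of_lt_of_le (by positivity) hbig
  have hvpos : ∀ t ∈ Set.Icc (0 : ℝ) t1, 0 < x t ^ 2 := by
    intro t ht
    have h := hvmono h0D ht ht.1
    simp only [hx0] at h
    linarith
  -- h = 1/v + 2εt is antitone
  have hh : ∀ t ∈ Set.Icc (0 : ℝ) t1, HasDerivAt (fun t => (x t ^ 2)⁻¹ + 2 * ε * t)
      (-(2 * x t * (x t * (1 + Real.cos (κ * t) * ((x t) ^ 2 + (y t) ^ 2)) +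
          Real.sin (κ * t) * ((x t) ^ 2 + (y t) ^ 2) * y t)) / (x t ^ 2) ^ 2 + 2 * ε) t := by
    intro t ht
    have hne : x t ^ 2 ≠ 0 := ne_of_gt (hvpos t ht)
    have h1 := (hv t ht).inv hne
    have h2 : HasDerivAt (fun t : ℝ => 2 * ε * t) (2 * ε) t := by
      simpa using (hasDerivAt_id t).const_mul (2 * ε)
    exact h1.add h2
  have hhanti : AntitoneOn (fun t => (x t ^ 2)⁻¹ + 2 * ε * t) (Set.Icc (0 : ℝ) t1) := by
    apply antitoneOn_of_deriv_nonpos (convex_Icc 0 t1)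
    · intro t ht; exact (hh t ht).continuousAt.continuousWithinAt
    · intro t ht
      rw [interior_Icc] at ht
      exact (hh t (hsub ht)).differentiableAt.differentiableWithinAt
    · intro t ht
      rw [interior_Icc] at ht
      rw [(hh t (hsub ht)).deriv]
      have h1 := hvlb t (hsub ht)
      have h2 : (0 : ℝ) < (x t ^ 2) ^ 2 := pow_pos (hvpos t (hsub ht)) 2
      rw [neg_div]
      have h3 : 2 * ε ≤ (2 * x t * (x t * (1 + Real.cos (κ * t) * ((x t) ^ 2 + (y t) ^ 2)) +
          Real.sin (κ * t) * ((x t) ^ 2 + (y t) ^ 2) * y t)) / (x t ^ 2) ^ 2 :=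
        (le_div_iff₀ h2).2 (by linarith)
      linarith
  -- conclude
  have hfin := hhanti h0D ht1D ht1.le
  simp only [hx0, mul_zero, add_zero] at hfin
  have hinv0 : (x0 ^ 2)⁻¹ ≤ 2 * ε * t1 := by
    rw [inv_eq_one_div, div_le_iff₀ hx0pos]
    have h4 := mul_le_mul_of_nonneg_left hbig h2e.le
    rw [mul_one_div, div_self (ne_of_gt h2e)] at h4
    nlinarith
  have h5 : 0 < (x t1 ^ 2)⁻¹ := inv_pos.2 (hvpos t1 ht1D)
  linarith
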